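/- Fix $L > 0$ and an integer $n \geq 2$. For all $\rho > 0$ and $z \in \mathbb{R}$, the renormalized potentials satisfy the exact identity $\sum_{i=1}^{n} u_i(\rho,z) = 2\log\rho - 2\log(2L)$. In particular, the static potential $\rho\, e^{-\frac{1}{2}\sum_{i=1}^n u_i}$ of the associated soliton spacetime is the constant $2L$. -/

import Mathlib

open Filter Topology

/-- The Green's function `U_{[a,b]}(ρ,z) = log(r_a - z_a) - log(r_b - z_b)` of a uniform
charge distribution along the interval `[a,b]` of the `z`-axis, where
`r_c = √(ρ² + (z-c)²)` and `z_c = z - c`. -/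
noncomputable def intervalGreen (a b ρ z : ℝ) : ℝ :=
  Real.log (Real.sqrt (ρ ^ 2 + (z - a) ^ 2) - (z - a)) -
    Real.log (Real.sqrt (ρ ^ 2 + (z - b) ^ 2) - (z - b))

/-- The Green's function of the rod `Γ_j = [(j-1)L/n, jL/n]`, `j ∈ ℤ`. -/
noncomputable def rodGreen (L : ℝ) (n : ℕ) (j : ℤ) (ρ z : ℝ) : ℝ :=
  intervalGreen (((j : ℝ) - 1) * L / n) ((j : ℝ) * L / n) ρ z

/-- The renormalized partial sums
`∑_{l=-m}^{m} U_{Γ_{nl+i}}(ρ,z) + (2/n) log m` defining the potential `u_i`. -/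
noncomputable def renormSum (L : ℝ) (n i : ℕ) (ρ z : ℝ) (m : ℕ) : ℝ :=
  (∑ l ∈ Finset.Icc (-(m : ℤ)) (m : ℤ), rodGreen L n ((n : ℤ) * l + (i : ℤ)) ρ z) +
    (2 / (n : ℝ)) * Real.log m

/-- The renormalized potential
`u_i(ρ,z) = lim_{m→∞} (∑_{l=-m}^{m} U_{Γ_{nl+i}}(ρ,z) + (2/n) log m)`. -/
noncomputable def renormPotential (L : ℝ) (n i : ℕ) (ρ z : ℝ) : ℝ :=
  limUnder atTop (fun m : ℕ => renormSum L n i ρ z m)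


lemma log_sqrt_sub (ρ t : ℝ) (hρ : 0 < ρ) :
    Real.log (Real.sqrt (ρ ^ 2 + t ^ 2) - t) = Real.log ρ - Real.arsinh (t / ρ) := by
  set u := t / ρ with hu
  have hu2 : (0:ℝ) ≤ 1 + u ^ 2 := by positivity
  have hs : Real.sqrt (1 + u ^ 2) ^ 2 = 1 + u ^ 2 := Real.sq_sqrt hu2
  have hsnn : 0 ≤ Real.sqrt (1 + u ^ 2) := Real.sqrt_nonneg _
  have hpos : 0 < u + Real.sqrt (1 + u ^ 2) := by nlinarith [sq_nonneg u, sq_nonneg (u + Real.sqrt (1 + u^2))]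
  have hinv : Real.sqrt (1 + u ^ 2) - u = (u + Real.sqrt (1 + u ^ 2))⁻¹ := by
    field_simp
    nlinarith
  have hexp : Real.exp (-(Real.arsinh u)) = Real.sqrt (1 + u ^ 2) - u := by
    rw [Real.exp_neg, Real.exp_arsinh, ← hinv]
  have hsqrt : Real.sqrt (ρ ^ 2 + t ^ 2) = ρ * Real.sqrt (1 + u ^ 2) := by
    rw [show ρ ^ 2 + t ^ 2 = ρ ^ 2 * (1 + u ^ 2) by rw [hu, div_pow]; field_simp, Real.sqrt_mul (sq_nonneg ρ),
      Real.sqrt_sq hρ.le]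
  have key : Real.sqrt (ρ ^ 2 + t ^ 2) - t = ρ * Real.exp (-(Real.arsinh u)) := by
    rw [hexp, hsqrt]
    rw [mul_sub, show ρ * u = t from by rw [hu]; field_simp [hρ.ne']]
  rw [key, Real.log_mul (ne_of_gt hρ) (Real.exp_ne_zero _), Real.log_exp]
  ring

lemma intervalGreen_eq' (a b ρ z : ℝ) (hρ : 0 < ρ) :
    Real.log (Real.sqrt (ρ ^ 2 + (z - a) ^ 2) - (z - a)) -
      Real.log (Real.sqrt (ρ ^ 2 + (z - b) ^ 2) - (z - b)) =
    Real.arsinh ((z - b) / ρ) - Real.arsinh ((z - a) / ρ) := by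
  rw [log_sqrt_sub ρ (z - a) hρ, log_sqrt_sub ρ (z - b) hρ]; ring

lemma arsinh_diff_bounds (x ε : ℝ) (hx : 0 ≤ x) (hε : 0 < ε) :
    ε / (1 + x + ε) ≤ Real.arsinh (x + ε) - Real.arsinh x ∧
      Real.arsinh (x + ε) - Real.arsinh x ≤ ε / Real.sqrt (1 + x ^ 2) := by
  obtain ⟨c, hc, hceq⟩ := exists_hasDerivAt_eq_slope Real.arsinh
    (fun y => (Real.sqrt (1 + y ^ 2))⁻¹) (show x < x + ε by linarith)
    Real.continuous_arsinh.continuousOn (fun y _ => Real.hasDerivAt_arsinh y)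
  have hcx : x < c := hc.1
  have hcx2 : c < x + ε := hc.2
  have hc0 : 0 < c := lt_of_le_of_lt hx hcx
  have hval : Real.arsinh (x + ε) - Real.arsinh x = ε * (Real.sqrt (1 + c ^ 2))⁻¹ := by
    have h2 : x + ε - x = ε := by ring
    rw [h2] at hceq
    field_simp at hceq ⊢
    linarith [hceq]
  have hsc : 0 < Real.sqrt (1 + c ^ 2) := Real.sqrt_pos.mpr (by positivity)
  have hsx : 0 < Real.sqrt (1 + x ^ 2) := Real.sqrt_pos.mpr (by positivity)
  constructor
  · have h1 : Real.sqrt (1 + c ^ 2) ≤ 1 + c := by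
      rw [show (1:ℝ) + c = Real.sqrt ((1 + c) ^ 2) from (Real.sqrt_sq (by linarith)).symm]
      exact Real.sqrt_le_sqrt (by nlinarith)
    have h2 : Real.sqrt (1 + c ^ 2) ≤ 1 + x + ε := le_trans h1 (by linarith)
    rw [hval, ← div_eq_mul_inv]
    exact div_le_div_of_nonneg_left hε.le hsc h2
  · have h1 : Real.sqrt (1 + x ^ 2) ≤ Real.sqrt (1 + c ^ 2) :=
      Real.sqrt_le_sqrt (by nlinarith)
    rw [hval]
    calc ε * (Real.sqrt (1 + c ^ 2))⁻¹ = ε / Real.sqrt (1 + c ^ 2) := (div_eq_mul_inv _ _).symm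
      _ ≤ ε / Real.sqrt (1 + x ^ 2) := div_le_div_of_nonneg_left hε.le hsx h1


lemma intervalGreen_eq (a b ρ z : ℝ) (hρ : 0 < ρ) :
    intervalGreen a b ρ z = Real.arsinh ((z - b) / ρ) - Real.arsinh ((z - a) / ρ) := by
  unfold intervalGreen
  exact intervalGreen_eq' a b ρ z hρ

noncomputable def seqTerm (a b ε : ℝ) (l : ℤ) : ℝ :=
  Real.arsinh (a - l * b) - Real.arsinh (a - l * b + ε)

noncomputable def seqF (a b ε : ℝ) (m : ℕ) : ℝ :=
  (∑ l ∈ Finset.Icc (-(m : ℤ)) (m : ℤ), seqTerm a b ε l) + 2 * ε / b * Real.log m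

lemma Icc_succ_eq (m : ℕ) :
    Finset.Icc (-((m : ℤ) + 1)) ((m : ℤ) + 1) =
      insert (-((m : ℤ) + 1)) (insert ((m : ℤ) + 1) (Finset.Icc (-(m : ℤ)) (m : ℤ))) := by
  ext x; simp only [Finset.mem_Icc, Finset.mem_insert]; omega

lemma seqF_succ (a b ε : ℝ) (m : ℕ) :
    seqF a b ε (m + 1) = seqF a b ε m + seqTerm a b ε ((m : ℤ) + 1) +
      seqTerm a b ε (-((m : ℤ) + 1)) + 2 * ε / b * (Real.log (m + 1) - Real.log m) := by
  unfold seqF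
  have h1 : (-((m + 1 : ℕ) : ℤ)) = -((m : ℤ) + 1) := by push_cast; ring
  have h2 : (((m + 1 : ℕ)) : ℤ) = (m : ℤ) + 1 := by push_cast; ring
  rw [h1, h2, Icc_succ_eq, Finset.sum_insert (by simp only [Finset.mem_insert, Finset.mem_Icc]; omega),
    Finset.sum_insert (by simp only [Finset.mem_Icc]; omega)]
  push_cast
  ring

lemma tele_Icc_int (Φ : ℤ → ℝ) (m : ℕ) :
    ∑ l ∈ Finset.Icc (-(m : ℤ)) (m : ℤ), (Φ (l + 1) - Φ l) = Φ ((m : ℤ) + 1) - Φ (-(m : ℤ)) := by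
  induction m with
  | zero => simp
  | succ m ih =>
    have h1 : (-((m + 1 : ℕ) : ℤ)) = -((m : ℤ) + 1) := by push_cast; ring
    have h2 : (((m + 1 : ℕ)) : ℤ) = (m : ℤ) + 1 := by push_cast; ring
    rw [h1, h2, Icc_succ_eq, Finset.sum_insert (by simp only [Finset.mem_insert, Finset.mem_Icc]; omega),
      Finset.sum_insert (by simp only [Finset.mem_Icc]; omega), ih]
    ring_nf

lemma tele_Icc_nat (F : ℕ → ℝ) (n : ℕ) :
    ∑ i ∈ Finset.Icc 1 n, (F i - F (i - 1)) = F n - F 0 := by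
  induction n with
  | zero => simp
  | succ n ih =>
    rw [show Finset.Icc 1 (n + 1) = insert (n + 1) (Finset.Icc 1 n) from by
        ext x; simp only [Finset.mem_Icc, Finset.mem_insert]; omega,
      Finset.sum_insert (by simp), ih]
    simp only [Nat.add_sub_cancel]
    ring

lemma arsinh_diff_le_div (x ε : ℝ) (hx : 0 < x) (hε : 0 < ε) :
    Real.arsinh (x + ε) - Real.arsinh x ≤ ε / x := by
  refine le_trans (arsinh_diff_bounds x ε hx.le hε).2 ?_
  have h1 : x ≤ Real.sqrt (1 + x ^ 2) := by
    rw [show x = Real.sqrt (x ^ 2) from (Real.sqrt_sq hx.le).symm]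
    exact Real.sqrt_le_sqrt (by nlinarith [Real.sq_sqrt (show (0:ℝ) ≤ x^2 by positivity)])
  exact div_le_div_of_nonneg_left hε.le hx h1

set_option maxHeartbeats 1000000 in
lemma seqF_incr_bound (a b ε : ℝ) (hb : 0 < b) (hε : 0 < ε) :
    ∃ M : ℕ, 1 ≤ M ∧ ∀ m : ℕ, M ≤ m →
      |seqF a b ε (m + 1) - seqF a b ε m| ≤ (4 * ε * (b + (1 + |a| + ε)) / b ^ 2) / (m : ℝ) ^ 2 := by
  set K : ℝ := 1 + |a| + ε with hK
  clear_value K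
  have hK1 : 1 ≤ K := by have := abs_nonneg a; rw [hK]; linarith
  have hKa : |a| + ε ≤ K := by rw [hK]; linarith
  have hKpos : 0 < K := by linarith
  refine ⟨⌈2 * K / b⌉₊ + 1, Nat.succ_le_succ (Nat.zero_le _), fun m hm => ?_⟩
  have hm1 : (1 : ℝ) ≤ (m : ℝ) := by exact_mod_cast Nat.one_le_iff_ne_zero.mpr (by omega)
  have hmpos : (0 : ℝ) < (m : ℝ) := by linarith
  have hmb : 2 * K ≤ (m : ℝ) * b := by
    have h1 : 2 * K / b ≤ (⌈2 * K / b⌉₊ : ℝ) := Nat.le_ceil _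
    have h2 : ((⌈2 * K / b⌉₊ + 1 : ℕ) : ℝ) ≤ (m : ℝ) := by exact_mod_cast hm
    push_cast at h2
    rw [div_le_iff₀ hb] at h1
    nlinarith
  set l : ℝ := (m : ℝ) + 1 with hl
  clear_value l
  have hlpos : 0 < l := by rw [hl]; linarith
  have hlb : 2 * K ≤ l * b := by
    rw [hl]
    have := mul_le_mul_of_nonneg_right (show (m : ℝ) ≤ (m : ℝ) + 1 by linarith) hb.le
    linarith
  have hlbpos : (0 : ℝ) < l * b := mul_pos hlpos hb
  have hlbK : 0 < l * b - K := by linarith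
  set x : ℝ := a + l * b with hx
  clear_value x
  set y : ℝ := l * b - a - ε with hy
  clear_value y
  have habs1 := le_abs_self a
  have habs2 := neg_abs_le a
  have hxK : l * b - K ≤ x := by rw [hx]; linarith
  have hyK : l * b - K ≤ y := by rw [hy]; linarith
  have hxpos : 0 < x := by linarith
  have hypos : 0 < y := by linarith
  -- term identities
  have hterm1 : seqTerm a b ε ((m : ℤ) + 1) = -(Real.arsinh (y + ε) - Real.arsinh y) := by
    unfold seqTerm
    have e2 : a - (((m : ℤ) + 1 : ℤ) : ℝ) * b + ε = -y := by rw [hy, hl]; push_cast; ring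
    have e1 : a - (((m : ℤ) + 1 : ℤ) : ℝ) * b = -(y + ε) := by rw [hy, hl]; push_cast; ring
    rw [e2, e1, Real.arsinh_neg, Real.arsinh_neg]; ring
  have hterm2 : seqTerm a b ε (-((m : ℤ) + 1)) = -(Real.arsinh (x + ε) - Real.arsinh x) := by
    unfold seqTerm
    have e2 : a - ((-((m : ℤ) + 1) : ℤ) : ℝ) * b + ε = x + ε := by rw [hx, hl]; push_cast; ring
    have e1 : a - ((-((m : ℤ) + 1) : ℤ) : ℝ) * b = x := by rw [hx, hl]; push_cast; ring
    rw [e2, e1]; ring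
  -- log bounds
  have hlog_up : Real.log ((m : ℝ) + 1) - Real.log m ≤ 1 / m := by
    have h1 : Real.log (((m : ℝ) + 1) / m) ≤ ((m : ℝ) + 1) / m - 1 :=
      Real.log_le_sub_one_of_pos (by positivity)
    rw [Real.log_div (by positivity) (by positivity)] at h1
    have : ((m : ℝ) + 1) / m - 1 = 1 / m := by field_simp; ring
    linarith
  have hlog_lo : 1 / l ≤ Real.log ((m : ℝ) + 1) - Real.log m := by
    have h1 : Real.log ((m : ℝ) / ((m : ℝ) + 1)) ≤ (m : ℝ) / ((m : ℝ) + 1) - 1 :=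
      Real.log_le_sub_one_of_pos (by positivity)
    rw [Real.log_div (by positivity) (by positivity)] at h1
    have : (m : ℝ) / ((m : ℝ) + 1) - 1 = -(1 / l) := by rw [hl]; field_simp; ring
    linarith
  have hcoef : 0 ≤ 2 * ε / b := by positivity
  have hs : (m : ℝ) * b ≤ l * b := by
    rw [hl]; exact mul_le_mul_of_nonneg_right (by linarith) hb.le
  have hsq : ((m : ℝ) * b) * ((m : ℝ) * b) ≤ (l * b) * (l * b) :=
    mul_le_mul hs hs (by positivity) hlbpos.le
  have hden_lo : b ^ 2 * (m : ℝ) ^ 2 / 2 ≤ (l * b) * (l * b - K) := by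
    have t1 : (l * b) * K ≤ (l * b) * (l * b / 2) :=
      mul_le_mul_of_nonneg_left (by linarith) hlbpos.le
    have e2 : b ^ 2 * (m : ℝ) ^ 2 = ((m : ℝ) * b) * ((m : ℝ) * b) := by ring
    have e3 : (l * b) * (l * b - K) = (l * b) * (l * b) - (l * b) * K := by ring
    have e4 : (l * b) * (l * b / 2) = (l * b) * (l * b) / 2 := by ring
    linarith
  have hden_up : b ^ 2 * (m : ℝ) ^ 2 ≤ (b * (m : ℝ)) * (l * b + K) := by
    have t1 : (b * (m : ℝ)) * ((m : ℝ) * b) ≤ (b * (m : ℝ)) * (l * b + K) :=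
      mul_le_mul_of_nonneg_left (by linarith) (by positivity)
    have e2 : b ^ 2 * (m : ℝ) ^ 2 = (b * (m : ℝ)) * ((m : ℝ) * b) := by ring
    linarith
  have hεbK : 0 ≤ ε * (b + K) := mul_nonneg hε.le (by linarith)
  have hεK : 0 ≤ ε * K := mul_nonneg hε.le hKpos.le
  have hεb : 0 ≤ ε * b := mul_nonneg hε.le hb.le
  -- arsinh diff bounds
  have hDx := arsinh_diff_bounds x ε hxpos.le hε
  have hDy := arsinh_diff_bounds y ε hypos.le hε
  have hDxu := arsinh_diff_le_div x ε hxpos hε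
  have hDyu := arsinh_diff_le_div y ε hypos hε
  rw [seqF_succ]
  have hd : seqF a b ε m + seqTerm a b ε ((m : ℤ) + 1) + seqTerm a b ε (-((m : ℤ) + 1)) +
      2 * ε / b * (Real.log (↑m + 1) - Real.log ↑m) - seqF a b ε m =
      -(Real.arsinh (y + ε) - Real.arsinh y) - (Real.arsinh (x + ε) - Real.arsinh x) +
        2 * ε / b * (Real.log ((m : ℝ) + 1) - Real.log m) := by
    rw [hterm1, hterm2]; push_cast; ring
  rw [hd, abs_le]
  have hbne : b ≠ 0 := ne_of_gt hb
  have hmne : (m : ℝ) ≠ 0 := ne_of_gt hmpos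
  have hlne : l ≠ 0 := ne_of_gt hlpos
  have hgoal_eq : 4 * ε * (b + K) / b ^ 2 / (m : ℝ) ^ 2 =
      4 * ε * (b + K) / (b ^ 2 * (m : ℝ) ^ 2) := div_div _ _ _
  constructor
  · -- lower bound
    have h1 : Real.arsinh (y + ε) - Real.arsinh y ≤ ε / (l * b - K) :=
      le_trans hDyu (div_le_div_of_nonneg_left hε.le hlbK hyK)
    have h2 : Real.arsinh (x + ε) - Real.arsinh x ≤ ε / (l * b - K) :=
      le_trans hDxu (div_le_div_of_nonneg_left hε.le hlbK hxK)
    have h3 : 2 * ε / b * (1 / l) ≤ 2 * ε / b * (Real.log ((m : ℝ) + 1) - Real.log m) :=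
      mul_le_mul_of_nonneg_left hlog_lo hcoef
    have key : -(4 * ε * (b + K) / b ^ 2 / (m : ℝ) ^ 2) ≤
        -(ε / (l * b - K)) - ε / (l * b - K) + 2 * ε / b * (1 / l) := by
      have e : -(ε / (l * b - K)) - ε / (l * b - K) + 2 * ε / b * (1 / l) =
          -(2 * ε * K / ((l * b) * (l * b - K))) := by
        have h0 : l * b - K ≠ 0 := ne_of_gt hlbK
        field_simp [h0, hbne, hlne]
        ring
      rw [e, hgoal_eq, neg_le_neg_iff]
      calc 2 * ε * K / ((l * b) * (l * b - K)) ≤ 2 * ε * K / (b ^ 2 * (m : ℝ) ^ 2 / 2) :=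
            div_le_div_of_nonneg_left (by positivity) (by positivity) hden_lo
        _ = 4 * ε * K / (b ^ 2 * (m : ℝ) ^ 2) := by
            rw [div_eq_div_iff (by positivity) (by positivity)]; ring
        _ ≤ 4 * ε * (b + K) / (b ^ 2 * (m : ℝ) ^ 2) := by
            apply div_le_div_of_nonneg_right _ (by positivity)
            linarith
    linarith
  · -- upper bound
    have hyb : 1 + y + ε ≤ l * b + K := by rw [hy]; linarith
    have hxb : 1 + x + ε ≤ l * b + K := by rw [hx]; linarith
    have hpos1 : (0:ℝ) < 1 + y + ε := by linarith
    have hpos2 : (0:ℝ) < 1 + x + ε := by linarith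
    have h1 : ε / (l * b + K) ≤ Real.arsinh (y + ε) - Real.arsinh y :=
      le_trans (div_le_div_of_nonneg_left hε.le hpos1 hyb) hDy.1
    have h2 : ε / (l * b + K) ≤ Real.arsinh (x + ε) - Real.arsinh x :=
      le_trans (div_le_div_of_nonneg_left hε.le hpos2 hxb) hDx.1
    have h3 : 2 * ε / b * (Real.log ((m : ℝ) + 1) - Real.log m) ≤ 2 * ε / b * (1 / m) :=
      mul_le_mul_of_nonneg_left hlog_up hcoef
    have key : -(ε / (l * b + K)) - ε / (l * b + K) + 2 * ε / b * (1 / m) ≤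
        4 * ε * (b + K) / b ^ 2 / (m : ℝ) ^ 2 := by
      have hlbKpos : (0:ℝ) < l * b + K := by linarith
      have e : -(ε / (l * b + K)) - ε / (l * b + K) + 2 * ε / b * (1 / m) =
          2 * ε * (b + K) / ((b * m) * (l * b + K)) := by
        have h0 : l * b + K ≠ 0 := ne_of_gt hlbKpos
        rw [hl] at h0 ⊢
        field_simp [h0, hbne]
        ring
      rw [e, hgoal_eq]
      calc 2 * ε * (b + K) / ((b * m) * (l * b + K)) ≤
            2 * ε * (b + K) / (b ^ 2 * (m : ℝ) ^ 2) :=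
            div_le_div_of_nonneg_left (by positivity) (by positivity) hden_up
        _ ≤ 4 * ε * (b + K) / (b ^ 2 * (m : ℝ) ^ 2) := by
            apply div_le_div_of_nonneg_right _ (by positivity)
            linarith
    linarith

lemma seqF_converges (a b ε : ℝ) (hb : 0 < b) (hε : 0 < ε) :
    ∃ c, Tendsto (seqF a b ε) atTop (𝓝 c) := by
  obtain ⟨M, hM1, hM⟩ := seqF_incr_bound a b ε hb hε
  set C : ℝ := 4 * ε * (b + (1 + |a| + ε)) / b ^ 2 with hC
  clear_value C
  set d : ℕ → ℝ := fun m => seqF a b ε (m + 1) - seqF a b ε m with hd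
  clear_value d
  have hsum : Summable d := by
    rw [← summable_nat_add_iff M]
    have hbase : Summable (fun m : ℕ => C * (1 / ((m + M : ℕ) : ℝ) ^ 2)) := by
      apply Summable.mul_left
      have h : Summable (fun n : ℕ => 1 / (n : ℝ) ^ 2) :=
        Real.summable_one_div_nat_pow.mpr one_lt_two
      exact (summable_nat_add_iff (f := fun n : ℕ => 1 / (n : ℝ) ^ 2) M).mpr h
    refine Summable.of_norm_bounded hbase fun m => ?_
    have h1 := hM (m + M) (by omega)
    rw [hd]
    simp only [Real.norm_eq_abs]
    calc |seqF a b ε (m + M + 1) - seqF a b ε (m + M)| ≤ C / ((m + M : ℕ) : ℝ) ^ 2 := by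
          exact_mod_cast h1
      _ = C * (1 / ((m + M : ℕ) : ℝ) ^ 2) := by ring
  have htel : ∀ m : ℕ, ∑ k ∈ Finset.range m, d k = seqF a b ε m - seqF a b ε 0 := by
    intro m
    rw [hd]
    exact Finset.sum_range_sub (seqF a b ε) m
  refine ⟨seqF a b ε 0 + ∑' k, d k, ?_⟩
  have h2 : Tendsto (fun m => ∑ k ∈ Finset.range m, d k) atTop (𝓝 (∑' k, d k)) :=
    hsum.hasSum.tendsto_sum_nat
  have h3 := h2.const_add (seqF a b ε 0)
  refine h3.congr fun m => ?_
  rw [htel m]; ring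

lemma add_sqrt_pos (t : ℝ) : 0 < t + Real.sqrt (1 + t ^ 2) := by
  nlinarith [Real.sq_sqrt (show (0:ℝ) ≤ 1 + t ^ 2 by positivity), Real.sqrt_nonneg (1 + t ^ 2),
    sq_nonneg t]

lemma renormSum_eq_seqF (L : ℝ) (hL : 0 < L) (n i : ℕ) (hn : 0 < n) (ρ z : ℝ) (hρ : 0 < ρ) :
    renormSum L n i ρ z = seqF ((z - i * L / n) / ρ) (L / ρ) (L / (n * ρ)) := by
  have hn' : (n : ℝ) ≠ 0 := Nat.cast_ne_zero.mpr hn.ne'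
  have hρ' : ρ ≠ 0 := hρ.ne'
  have hL' : L ≠ 0 := hL.ne'
  funext m
  unfold renormSum seqF
  congr 1
  · apply Finset.sum_congr rfl
    intro l _
    unfold rodGreen seqTerm
    rw [intervalGreen_eq _ _ _ _ hρ]
    congr 1
    · congr 1
      push_cast
      field_simp
      ring
    · congr 1
      push_cast
      field_simp
      ring
  · congr 1
    field_simp

lemma total_sum_eq (L : ℝ) (hL : 0 < L) (n : ℕ) (hn : 0 < n) (ρ z : ℝ) (hρ : 0 < ρ) (m : ℕ) :
    ∑ i ∈ Finset.Icc 1 n, renormSum L n i ρ z m =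
      Real.arsinh ((z - ((m : ℝ) + 1) * L) / ρ) - Real.arsinh ((z + (m : ℝ) * L) / ρ) +
        2 * Real.log m := by
  have hn' : (n : ℝ) ≠ 0 := Nat.cast_ne_zero.mpr hn.ne'
  have hρ' : ρ ≠ 0 := hρ.ne'
  unfold renormSum
  rw [Finset.sum_add_distrib]
  have hB : ∑ _i ∈ Finset.Icc 1 n, 2 / (n : ℝ) * Real.log m = 2 * Real.log m := by
    rw [Finset.sum_const, Nat.card_Icc]
    simp only [Nat.add_sub_cancel, nsmul_eq_mul]
    field_simp
  rw [hB]
  congr 1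
  rw [Finset.sum_comm]
  have hinner : ∀ l ∈ Finset.Icc (-(m : ℤ)) (m : ℤ),
      ∑ i ∈ Finset.Icc 1 n, rodGreen L n ((n : ℤ) * l + (i : ℤ)) ρ z =
        (fun l : ℤ => Real.arsinh ((z - (l : ℝ) * L) / ρ)) (l + 1) -
          (fun l : ℤ => Real.arsinh ((z - (l : ℝ) * L) / ρ)) l := by
    intro l _
    set F : ℕ → ℝ := fun k => Real.arsinh ((z - ((n : ℝ) * (l : ℝ) + (k : ℝ)) * L / n) / ρ)
      with hF
    have hstep : ∀ i ∈ Finset.Icc 1 n,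
        rodGreen L n ((n : ℤ) * l + (i : ℤ)) ρ z = F i - F (i - 1) := by
      intro i hi
      have hi1 : 1 ≤ i := (Finset.mem_Icc.mp hi).1
      unfold rodGreen
      rw [intervalGreen_eq _ _ _ _ hρ, hF]
      congr 2
      · push_cast
        ring
      · push_cast [Nat.cast_sub hi1]
        ring
    rw [Finset.sum_congr rfl hstep, tele_Icc_nat F n, hF]
    simp only
    congr 2
    · push_cast
      field_simp
    · push_cast
      field_simp
      ring
  rw [Finset.sum_congr rfl hinner,
    tele_Icc_int (fun l : ℤ => Real.arsinh ((z - (l : ℝ) * L) / ρ)) m]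
  push_cast
  ring

lemma aux_tendsto (c d ρ' : ℝ) (hd : 0 < d) (hρ' : 0 < ρ') :
    Tendsto (fun m : ℕ => ((c + (m : ℝ) * d) / ρ' +
      Real.sqrt (1 + ((c + (m : ℝ) * d) / ρ') ^ 2)) / m) atTop (𝓝 (2 * d / ρ')) := by
  have hρ'' : ρ' ≠ 0 := hρ'.ne'
  have claim1 : Tendsto (fun m : ℕ => (c + (m : ℝ) * d) / ρ' / m) atTop (𝓝 (d / ρ')) := by
    have h0 : Tendsto (fun m : ℕ => c / ρ' * (1 / m) + d / ρ') atTop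
        (𝓝 (c / ρ' * 0 + d / ρ')) :=
      (tendsto_one_div_atTop_nhds_zero_nat.const_mul _).add_const _
    rw [mul_zero, zero_add] at h0
    refine h0.congr' ?_
    filter_upwards [eventually_ge_atTop 1] with m hm
    have hm' : (m : ℝ) ≠ 0 := Nat.cast_ne_zero.mpr (by omega)
    field_simp
  have claim2 : Tendsto (fun m : ℕ => Real.sqrt (1 + ((c + (m : ℝ) * d) / ρ') ^ 2) / m) atTop
      (𝓝 (d / ρ')) := by
    have hin : Tendsto (fun m : ℕ => 1 / (m : ℝ) ^ 2 + ((c + (m : ℝ) * d) / ρ' / m) ^ 2) atTop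
        (𝓝 (0 + (d / ρ') ^ 2)) := by
      apply Tendsto.add
      · have := (tendsto_one_div_atTop_nhds_zero_nat (𝕜 := ℝ)).mul (tendsto_one_div_atTop_nhds_zero_nat (𝕜 := ℝ))
        rw [mul_zero] at this
        refine this.congr fun m => ?_
        ring
      · exact claim1.pow 2
    have hs : Tendsto (fun m : ℕ => Real.sqrt (1 / (m : ℝ) ^ 2 +
        ((c + (m : ℝ) * d) / ρ' / m) ^ 2)) atTop (𝓝 (Real.sqrt (0 + (d / ρ') ^ 2))) :=
      (Real.continuous_sqrt.tendsto _).comp hin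
    rw [zero_add, Real.sqrt_sq (by positivity)] at hs
    refine hs.congr' ?_
    filter_upwards [eventually_ge_atTop 1] with m hm
    have hm' : (m : ℝ) ≠ 0 := Nat.cast_ne_zero.mpr (by omega)
    rw [show 1 / (m : ℝ) ^ 2 + ((c + (m : ℝ) * d) / ρ' / m) ^ 2 =
      (1 + ((c + (m : ℝ) * d) / ρ') ^ 2) / (m : ℝ) ^ 2 by field_simp]
    rw [Real.sqrt_div (by positivity) _, Real.sqrt_sq (by positivity)]
  have := claim1.add claim2
  rw [show d / ρ' + d / ρ' = 2 * d / ρ' by ring] at this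
  refine this.congr fun m => ?_
  ring
lemma total_tendsto (L ρ z : ℝ) (hL : 0 < L) (hρ : 0 < ρ) :
    Tendsto (fun m : ℕ => Real.arsinh ((z - ((m : ℝ) + 1) * L) / ρ) -
        Real.arsinh ((z + (m : ℝ) * L) / ρ) + 2 * Real.log m) atTop
      (𝓝 (2 * Real.log ρ - 2 * Real.log (2 * L))) := by
  have hP := aux_tendsto (L - z) L ρ hL hρ
  have hQ := aux_tendsto z L ρ hL hρ
  have hmul := hP.mul hQ
  have hpos : (0 : ℝ) < 2 * L / ρ * (2 * L / ρ) := by positivity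
  have hlog : Tendsto (fun m : ℕ =>
      -Real.log ((((L - z) + (m : ℝ) * L) / ρ +
          Real.sqrt (1 + (((L - z) + (m : ℝ) * L) / ρ) ^ 2)) / m *
        (((z + (m : ℝ) * L) / ρ + Real.sqrt (1 + ((z + (m : ℝ) * L) / ρ) ^ 2)) / m))) atTop
      (𝓝 (-Real.log (2 * L / ρ * (2 * L / ρ)))) :=
    (((Real.continuousAt_log hpos.ne').tendsto).comp hmul).neg
  have hval : -Real.log (2 * L / ρ * (2 * L / ρ)) = 2 * Real.log ρ - 2 * Real.log (2 * L) := by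
    have h2L : (2 : ℝ) * L ≠ 0 := by positivity
    rw [Real.log_mul (by positivity) (by positivity), Real.log_div h2L hρ.ne']
    ring
  rw [hval] at hlog
  refine hlog.congr' ?_
  filter_upwards [eventually_ge_atTop 1] with m hm
  have hm' : (0 : ℝ) < (m : ℝ) := by exact_mod_cast Nat.lt_of_lt_of_le Nat.zero_lt_one hm
  set X : ℝ := ((L - z) + (m : ℝ) * L) / ρ with hX
  set Y : ℝ := (z + (m : ℝ) * L) / ρ with hY
  have hPX : 0 < X + Real.sqrt (1 + X ^ 2) := add_sqrt_pos X
  have hPY : 0 < Y + Real.sqrt (1 + Y ^ 2) := add_sqrt_pos Y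
  rw [Real.log_mul (by positivity) (by positivity), Real.log_div hPX.ne' hm'.ne',
    Real.log_div hPY.ne' hm'.ne']
  have hXa : Real.arsinh ((z - ((m : ℝ) + 1) * L) / ρ) = -Real.log (X + Real.sqrt (1 + X ^ 2)) := by
    have : (z - ((m : ℝ) + 1) * L) / ρ = -X := by rw [hX]; field_simp; ring
    rw [this, Real.arsinh_neg]
    unfold Real.arsinh
    rfl
  have hYa : Real.arsinh ((z + (m : ℝ) * L) / ρ) = Real.log (Y + Real.sqrt (1 + Y ^ 2)) := by
    rw [hY]
    unfold Real.arsinh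
    rfl
  rw [hXa, hYa]
  ring


/-- **Constant lapse identity.** For `L > 0` and `n ≥ 2`, the renormalized potentials
satisfy `∑_{i=1}^{n} u_i(ρ,z) = 2 log ρ - 2 log(2L)` for all `ρ > 0`, `z ∈ ℝ`.
In particular, the static potential `ρ e^{-(1/2)∑ u_i}` of the associated soliton
spacetime is the constant `2L`. -/
theorem renormPotential_sum (L : ℝ) (hL : 0 < L) (n : ℕ) (hn : 2 ≤ n)
    (ρ z : ℝ) (hρ : 0 < ρ) :
    (∑ i ∈ Finset.Icc 1 n, renormPotential L n i ρ z) =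
      2 * Real.log ρ - 2 * Real.log (2 * L) ∧
    ρ * Real.exp (-(1 / 2) * ∑ i ∈ Finset.Icc 1 n, renormPotential L n i ρ z) =
      2 * L := by
  have hn0 : 0 < n := by omega
  have hconv : ∀ i : ℕ, ∃ c, Tendsto (fun m : ℕ => renormSum L n i ρ z m) atTop (𝓝 c) := by
    intro i
    have heq := renormSum_eq_seqF L hL n i hn0 ρ z hρ
    rw [show (fun m : ℕ => renormSum L n i ρ z m) = renormSum L n i ρ z from rfl, heq]
    exact seqF_converges _ _ _ (by positivity) (by positivity)
  choose c hc using hconv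
  have hpot : ∀ i : ℕ, renormPotential L n i ρ z = c i := fun i => (hc i).limUnder_eq
  have hsum_tendsto : Tendsto (fun m : ℕ => ∑ i ∈ Finset.Icc 1 n, renormSum L n i ρ z m) atTop
      (𝓝 (∑ i ∈ Finset.Icc 1 n, c i)) := tendsto_finset_sum _ (fun i _ => hc i)
  have htotal : Tendsto (fun m : ℕ => ∑ i ∈ Finset.Icc 1 n, renormSum L n i ρ z m) atTop
      (𝓝 (2 * Real.log ρ - 2 * Real.log (2 * L))) := by
    refine (total_tendsto L ρ z hL hρ).congr fun m => ?_
    exact (total_sum_eq L hL n hn0 ρ z hρ m).symm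
  have hkey : ∑ i ∈ Finset.Icc 1 n, c i = 2 * Real.log ρ - 2 * Real.log (2 * L) :=
    tendsto_nhds_unique hsum_tendsto htotal
  have h1 : (∑ i ∈ Finset.Icc 1 n, renormPotential L n i ρ z) =
      2 * Real.log ρ - 2 * Real.log (2 * L) := by
    rw [Finset.sum_congr rfl (fun i _ => hpot i), hkey]
  refine ⟨h1, ?_⟩
  rw [h1, show -(1 / 2 : ℝ) * (2 * Real.log ρ - 2 * Real.log (2 * L)) =
      Real.log (2 * L) - Real.log ρ by ring,
    Real.exp_sub, Real.exp_log (by positivity), Real.exp_log hρ]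
  field_simp
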